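/- Fix positive integers N, τ_p with N > τ_p, finite UE sets 𝓤_u and 𝓤_d, a pilot-sharing partition assigning to each UL UE k the set 𝓟_k ⊆ 𝓤_u of UEs sharing its pilot, nonnegative channel parameters α_{mk}, β_{mk} with β_{mk} ≥ α_{mk}², inter-AP interference powers ζ_{mj} ≥ 0, cross-UE variances ε_{nk} ≥ 0, pilot correlations ρ_{nq} ≥ 0, powers 𝓔_u > 0, 𝓔_d > 0, and N₀ > 0, and a finite ground AP set 𝓐. For disjoint subsets 𝓐_u, 𝓐_d ⊆ 𝓐 and variables ω = (ω_{mk}) ∈ ℂ^{𝓐_u × 𝓤_u}, 𝓔 = (𝓔_{u,k}) with 0 ≤ 𝓔_{u,k} ≤ 𝓔_u, and κ = (κ_{jn}) ∈ ℝ^{𝓐_d × 𝓤_d} with Σ_{q ∈ 𝓤_d} κ_{jq}² ≤ 1 for each j ∈ 𝓐_d, define the UL SINRs η_{u,k} = (N−τ_p)·𝓔_{u,k}·|Σ_{m∈𝓐_u} \overline{ω_{mk}} α_{mk}²|² / (Σ_{k'∈𝓤_u} 𝓔_{u,k'} Σ_{m∈𝓐_u} |ω_{mk}|² α_{mk}²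 (β_{mk'} − α_{mk'}²) + (N−τ_p)·Σ_{i∈𝓟_k∖{k}} 𝓔_{u,i} |Σ_{m∈𝓐_u} \overline{ω_{mk}} α_{mi}²|² + N·Σ_{n∈𝓤_d} Σ_{m∈𝓐_u} Σ_{j∈𝓐_d} 𝓔_d κ_{jn}² ζ_{mj} |ω_{mk}|² α_{mk}² + N₀·Σ_{m∈𝓐_u} |ω_{mk}|² α_{mk}²), the DL SINRs η_{d,n} = (N−τ_p)·𝓔_d·(Σ_{j∈𝓐_d} α_{jn} κ_{jn})² / (Σ_{q∈𝓤_d} Σ_{j∈𝓐_d} 𝓔_d κ_{jq}² (β_{jn} − α_{jn}²) + (N−τ_p)·𝓔_d·Σ_{q∈𝓤_d, q≠n} ρ_{nq} (Σ_{j∈𝓐_d} κ_{jq} α_{jn})² + Σ_{k∈𝓤_u} 𝓔_{u,k} ε_{nk} + N₀) (with the convention that a fraction with zero denominator is 0), and the sum spectral efficiency R_s(𝓐_u, 𝓐_d; ω, 𝓔, κ) = Σ_{k∈𝓤_u} log(1 + η_{u,k}) + Σ_{n∈𝓤_d} log(1 + η_{d,n}). Let R̄(𝓐_u, 𝓐_d)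 denote the supremum of R_s over all feasible (ω, 𝓔, κ). Then for any disjoint pairs with 𝓐_u ⊆ 𝓐_u' and 𝓐_d ⊆ 𝓐_d' (𝓐_u' and 𝓐_d' disjoint subsets of 𝓐), one has R̄(𝓐_u, 𝓐_d) ≤ R̄(𝓐_u', 𝓐_d'); i.e., the optimized sum UL-DL spectral efficiency is monotonically non-decreasing in the scheduled AP sets. -/

import Mathlib

open Finset

private lemma sum_restrict' {A M : Type*} [AddCommMonoid M] {s t : Finset A} (hst : s ⊆ t)
    {f g : A → M} (h0 : ∀ m ∈ t, m ∉ s → f m = 0) (heq : ∀ m ∈ s, f m = g m) :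
    ∑ m ∈ t, f m = ∑ m ∈ s, g m := by
  rw [← Finset.sum_subset hst h0]
  exact Finset.sum_congr rfl heq

/-- Monotonicity of the optimized sum UL-DL spectral efficiency in the scheduled AP sets
(Proposition 2): if `𝓐_u ⊆ 𝓐_u'` and `𝓐_d ⊆ 𝓐_d'` (each pair disjoint), then
`R̄(𝓐_u, 𝓐_d) ≤ R̄(𝓐_u', 𝓐_d')`, where `R̄` is the supremum of the closed-form ZF sum
spectral efficiency over the feasible CPU weights, UL transmit powers, and DL power
control coefficients. -/
theorem stmt_16 {A Uu Ud : Type*} [Fintype A] [Fintype Uu] [Fintype Ud]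
    [DecidableEq A] [DecidableEq Uu] [DecidableEq Ud]
    (N τp : ℕ) (hNτ : τp < N)
    (P : Uu → Finset Uu)
    (αu βu : A → Uu → ℝ) (hαu : ∀ m k, 0 ≤ αu m k) (hβu : ∀ m k, (αu m k) ^ 2 ≤ βu m k)
    (αd βd : A → Ud → ℝ) (hαd : ∀ j n, 0 ≤ αd j n) (hβd : ∀ j n, (αd j n) ^ 2 ≤ βd j n)
    (ζ : A → A → ℝ) (hζ : ∀ m j, 0 ≤ ζ m j)
    (ε : Ud → Uu → ℝ) (hε : ∀ n k, 0 ≤ ε n k)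
    (ρ : Ud → Ud → ℝ) (hρ : ∀ n q, 0 ≤ ρ n q)
    (Eu Ed N₀ : ℝ) (hEu : 0 < Eu) (hEd : 0 < Ed) (hN₀ : 0 < N₀)
    (ηu : Finset A → Finset A → (A → Uu → ℂ) → (Uu → ℝ) → (A → Ud → ℝ) → Uu → ℝ)
    (hηu : ∀ (Au Ad : Finset A) (ω : A → Uu → ℂ) (E : Uu → ℝ) (κ : A → Ud → ℝ) (k : Uu),
      ηu Au Ad ω E κ k =
        ((N : ℝ) - τp) * E k * ‖∑ m ∈ Au, (starRingEnd ℂ) (ω m k) * (((αu m k) ^ 2 : ℝ) : ℂ)‖ ^ 2 /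
          ((∑ k' : Uu, E k' * ∑ m ∈ Au, ‖ω m k‖ ^ 2 * (αu m k) ^ 2 * (βu m k' - (αu m k') ^ 2))
            + ((N : ℝ) - τp) *
              (∑ i ∈ (P k).erase k,
                E i * ‖∑ m ∈ Au, (starRingEnd ℂ) (ω m k) * (((αu m i) ^ 2 : ℝ) : ℂ)‖ ^ 2)
            + (N : ℝ) *
              (∑ n : Ud, ∑ m ∈ Au, ∑ j ∈ Ad, Ed * (κ j n) ^ 2 * ζ m j * ‖ω m k‖ ^ 2 * (αu m k) ^ 2)
            + N₀ * ∑ m ∈ Au, ‖ω m k‖ ^ 2 * (αu m k) ^ 2))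
    (ηd : Finset A → (Uu → ℝ) → (A → Ud → ℝ) → Ud → ℝ)
    (hηd : ∀ (Ad : Finset A) (E : Uu → ℝ) (κ : A → Ud → ℝ) (n : Ud),
      ηd Ad E κ n =
        ((N : ℝ) - τp) * Ed * (∑ j ∈ Ad, αd j n * κ j n) ^ 2 /
          ((∑ q : Ud, ∑ j ∈ Ad, Ed * (κ j q) ^ 2 * (βd j n - (αd j n) ^ 2))
            + ((N : ℝ) - τp) * Ed *
              (∑ q ∈ Finset.univ.erase n, ρ n q * (∑ j ∈ Ad, κ j q * αd j n) ^ 2)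
            + (∑ k : Uu, E k * ε n k) + N₀))
    (Rs : Finset A → Finset A → (A → Uu → ℂ) → (Uu → ℝ) → (A → Ud → ℝ) → ℝ)
    (hRs : ∀ (Au Ad : Finset A) (ω : A → Uu → ℂ) (E : Uu → ℝ) (κ : A → Ud → ℝ),
      Rs Au Ad ω E κ = (∑ k : Uu, Real.log (1 + ηu Au Ad ω E κ k))
        + ∑ n : Ud, Real.log (1 + ηd Ad E κ n))
    (Rbar : Finset A → Finset A → ℝ)
    (hRbar : ∀ Au Ad : Finset A,
      Rbar Au Ad = sSup {r : ℝ | ∃ (ω : A → Uu → ℂ) (E : Uu → ℝ) (κ : A → Ud → ℝ),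
        (∀ k, 0 ≤ E k ∧ E k ≤ Eu) ∧ (∀ j : A, ∑ q : Ud, (κ j q) ^ 2 ≤ 1) ∧
        r = Rs Au Ad ω E κ}) :
    ∀ Au Ad Au' Ad' : Finset A, Disjoint Au Ad → Disjoint Au' Ad' →
      Au ⊆ Au' → Ad ⊆ Ad' → Rbar Au Ad ≤ Rbar Au' Ad' := by
  intro Au Ad Au' Ad' hdis hdis' hAu hAd
  have hc : (0:ℝ) < (N:ℝ) - τp := by
    have : (τp:ℝ) < (N:ℝ) := by exact_mod_cast hNτ
    linarith
  -- uniform bounds on the SINRs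
  set Cu : Uu → ℝ := fun k => ((N:ℝ) - τp) * Eu * (∑ m : A, (αu m k) ^ 2) / N₀ with hCu
  set Cd : Ud → ℝ := fun n =>
    ((N:ℝ) - τp) * Ed * ((Fintype.card A : ℝ) * ∑ j : A, (αd j n) ^ 2) / N₀ with hCd
  have hCu0 : ∀ k, 0 ≤ Cu k := fun k => by
    apply div_nonneg _ hN₀.le
    have : 0 ≤ ∑ m : A, (αu m k) ^ 2 := Finset.sum_nonneg fun m _ => sq_nonneg _
    positivity
  have hCd0 : ∀ n, 0 ≤ Cd n := fun n => by
    apply div_nonneg _ hN₀.le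
    have : 0 ≤ ∑ j : A, (αd j n) ^ 2 := Finset.sum_nonneg fun j _ => sq_nonneg _
    positivity
  set B : ℝ := (∑ k : Uu, Real.log (1 + Cu k)) + ∑ n : Ud, Real.log (1 + Cd n) with hB
  -- nonnegativity and boundedness of the UL SINR
  have hηu_bound : ∀ (Au Ad : Finset A) (ω : A → Uu → ℂ) (E : Uu → ℝ) (κ : A → Ud → ℝ),
      (∀ k, 0 ≤ E k ∧ E k ≤ Eu) → ∀ k,
      0 ≤ ηu Au Ad ω E κ k ∧ ηu Au Ad ω E κ k ≤ Cu k := by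
    intro Au Ad ω E κ hE k
    rw [hηu]
    set s : ℝ := ∑ m ∈ Au, ‖ω m k‖ ^ 2 * (αu m k) ^ 2 with hsdef
    set t : ℝ := ∑ m ∈ Au, (αu m k) ^ 2 with htdef
    have hs0 : 0 ≤ s := Finset.sum_nonneg fun m _ => by positivity
    have ht0 : 0 ≤ t := Finset.sum_nonneg fun m _ => sq_nonneg _
    have htA : t ≤ ∑ m : A, (αu m k) ^ 2 :=
      Finset.sum_le_sum_of_subset_of_nonneg (Finset.subset_univ _)
        (fun m _ _ => sq_nonneg _)
    set z : ℂ := ∑ m ∈ Au, (starRingEnd ℂ) (ω m k) * (((αu m k) ^ 2 : ℝ) : ℂ) with hzdef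
    have hz : ‖z‖ ^ 2 ≤ s * t := by
      have h1 : ‖z‖ ≤ ∑ m ∈ Au, ‖ω m k‖ * (αu m k) ^ 2 := by
        refine (norm_sum_le _ _).trans_eq (Finset.sum_congr rfl fun m _ => ?_)
        rw [norm_mul, RingHomIsometric.norm_map, Complex.norm_real, Real.norm_eq_abs,
          abs_of_nonneg (sq_nonneg _)]
      have h2 : (∑ m ∈ Au, ‖ω m k‖ * (αu m k) ^ 2) ^ 2 ≤ s * t := by
        have := Finset.sum_mul_sq_le_sq_mul_sq Au (fun m => ‖ω m k‖ * αu m k)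
          (fun m => αu m k)
        calc (∑ m ∈ Au, ‖ω m k‖ * (αu m k) ^ 2) ^ 2
            = (∑ m ∈ Au, (‖ω m k‖ * αu m k) * αu m k) ^ 2 := by
              congr 1; exact Finset.sum_congr rfl fun m _ => by ring
          _ ≤ (∑ m ∈ Au, (‖ω m k‖ * αu m k) ^ 2) * ∑ m ∈ Au, (αu m k) ^ 2 := this
          _ = s * t := by
              congr 1; exact Finset.sum_congr rfl fun m _ => by ring
      calc ‖z‖ ^ 2 ≤ (∑ m ∈ Au, ‖ω m k‖ * (αu m k) ^ 2) ^ 2 := by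
            apply pow_le_pow_left₀ (norm_nonneg _) h1
        _ ≤ s * t := h2
    have hnum0 : 0 ≤ ((N:ℝ) - τp) * E k * ‖z‖ ^ 2 := by
      have := (hE k).1; positivity
    have hnum : ((N:ℝ) - τp) * E k * ‖z‖ ^ 2 ≤ ((N:ℝ) - τp) * Eu * (s * t) := by
      have h1 : ((N:ℝ) - τp) * E k ≤ ((N:ℝ) - τp) * Eu :=
        mul_le_mul_of_nonneg_left (hE k).2 hc.le
      calc ((N:ℝ) - τp) * E k * ‖z‖ ^ 2 ≤ ((N:ℝ) - τp) * E k * (s * t) := by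
            apply mul_le_mul_of_nonneg_left hz
            have := (hE k).1; positivity
        _ ≤ ((N:ℝ) - τp) * Eu * (s * t) :=
            mul_le_mul_of_nonneg_right h1 (by positivity)
    set d : ℝ := (∑ k' : Uu, E k' * ∑ m ∈ Au, ‖ω m k‖ ^ 2 * (αu m k) ^ 2 * (βu m k' - (αu m k') ^ 2))
        + ((N:ℝ) - τp) * (∑ i ∈ (P k).erase k,
            E i * ‖∑ m ∈ Au, (starRingEnd ℂ) (ω m k) * (((αu m i) ^ 2 : ℝ) : ℂ)‖ ^ 2)
        + (N:ℝ) * (∑ n : Ud, ∑ m ∈ Au, ∑ j ∈ Ad, Ed * (κ j n) ^ 2 * ζ m j * ‖ω m k‖ ^ 2 * (αu m k) ^ 2)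
        + N₀ * s with hddef
    have hd : N₀ * s ≤ d := by
      have h1 : 0 ≤ ∑ k' : Uu, E k' * ∑ m ∈ Au, ‖ω m k‖ ^ 2 * (αu m k) ^ 2 * (βu m k' - (αu m k') ^ 2) := by
        apply Finset.sum_nonneg; intro k' _
        apply mul_nonneg (hE k').1
        apply Finset.sum_nonneg; intro m _
        have h := hβu m k'
        have : 0 ≤ βu m k' - (αu m k') ^ 2 := by linarith
        positivity
      have h2 : 0 ≤ ∑ i ∈ (P k).erase k,
          E i * ‖∑ m ∈ Au, (starRingEnd ℂ) (ω m k) * (((αu m i) ^ 2 : ℝ) : ℂ)‖ ^ 2 :=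
        Finset.sum_nonneg fun i _ => mul_nonneg (hE i).1 (sq_nonneg _)
      have h3 : 0 ≤ ∑ n : Ud, ∑ m ∈ Au, ∑ j ∈ Ad,
          Ed * (κ j n) ^ 2 * ζ m j * ‖ω m k‖ ^ 2 * (αu m k) ^ 2 := by
        apply Finset.sum_nonneg; intro n _
        apply Finset.sum_nonneg; intro m _
        apply Finset.sum_nonneg; intro j _
        have := hζ m j; positivity
      have hN0' : (0:ℝ) ≤ (N:ℝ) := Nat.cast_nonneg _
      nlinarith [mul_nonneg hc.le h2, mul_nonneg hN0' h3]
    have hd0 : 0 ≤ d := le_trans (by positivity) hd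
    constructor
    · exact div_nonneg hnum0 hd0
    · rcases eq_or_lt_of_le hs0 with hs | hs
      · -- s = 0 forces numerator = 0
        have hzz : ‖z‖ ^ 2 ≤ 0 := by
          have : s * t = 0 := by rw [← hs, zero_mul]
          linarith [hz]
        have : ‖z‖ ^ 2 = 0 := le_antisymm hzz (sq_nonneg _)
        rw [this, mul_zero, zero_div]
        exact hCu0 k
      · have hds : 0 < N₀ * s := by positivity
        calc ((N:ℝ) - τp) * E k * ‖z‖ ^ 2 / d
            ≤ ((N:ℝ) - τp) * Eu * (s * t) / (N₀ * s) :=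
              div_le_div₀ (by positivity) hnum hds hd
          _ = ((N:ℝ) - τp) * Eu * t / N₀ := by
              have hs' : s ≠ 0 := ne_of_gt hs
              field_simp
          _ ≤ Cu k := by
              simp only [hCu]
              gcongr
  -- nonnegativity and boundedness of the DL SINR
  have hηd_bound : ∀ (Ad : Finset A) (E : Uu → ℝ) (κ : A → Ud → ℝ),
      (∀ k, 0 ≤ E k ∧ E k ≤ Eu) → (∀ j : A, ∑ q : Ud, (κ j q) ^ 2 ≤ 1) → ∀ n,
      0 ≤ ηd Ad E κ n ∧ ηd Ad E κ n ≤ Cd n := by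
    intro Ad E κ hE hκ n
    rw [hηd]
    have hκ1 : ∀ j, (κ j n) ^ 2 ≤ 1 := fun j =>
      le_trans (Finset.single_le_sum (f := fun q => (κ j q) ^ 2)
        (fun q _ => sq_nonneg _) (Finset.mem_univ n)) (hκ j)
    have hκsum : (∑ j ∈ Ad, (κ j n) ^ 2) ≤ (Fintype.card A : ℝ) := by
      calc (∑ j ∈ Ad, (κ j n) ^ 2) ≤ ∑ _j ∈ Ad, (1:ℝ) :=
            Finset.sum_le_sum fun j _ => hκ1 j
        _ = Ad.card := by simp
        _ ≤ (Fintype.card A : ℝ) := by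
            exact_mod_cast Finset.card_le_card (Finset.subset_univ Ad)
    have hα0 : (0:ℝ) ≤ ∑ j ∈ Ad, (αd j n) ^ 2 := Finset.sum_nonneg fun j _ => sq_nonneg _
    have hαA : (∑ j ∈ Ad, (αd j n) ^ 2) ≤ ∑ j : A, (αd j n) ^ 2 :=
      Finset.sum_le_sum_of_subset_of_nonneg (Finset.subset_univ _) fun j _ _ => sq_nonneg _
    have hcs : (∑ j ∈ Ad, αd j n * κ j n) ^ 2 ≤ (Fintype.card A : ℝ) * ∑ j : A, (αd j n) ^ 2 := by
      calc (∑ j ∈ Ad, αd j n * κ j n) ^ 2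
          ≤ (∑ j ∈ Ad, (αd j n) ^ 2) * ∑ j ∈ Ad, (κ j n) ^ 2 :=
            Finset.sum_mul_sq_le_sq_mul_sq Ad (fun j => αd j n) (fun j => κ j n)
        _ ≤ (∑ j : A, (αd j n) ^ 2) * (Fintype.card A : ℝ) := by
            apply mul_le_mul hαA hκsum (Finset.sum_nonneg fun j _ => sq_nonneg _)
            exact Finset.sum_nonneg fun j _ => sq_nonneg _
        _ = (Fintype.card A : ℝ) * ∑ j : A, (αd j n) ^ 2 := mul_comm _ _
    have hnum0 : 0 ≤ ((N:ℝ) - τp) * Ed * (∑ j ∈ Ad, αd j n * κ j n) ^ 2 := by positivity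
    have hnum : ((N:ℝ) - τp) * Ed * (∑ j ∈ Ad, αd j n * κ j n) ^ 2
        ≤ ((N:ℝ) - τp) * Ed * ((Fintype.card A : ℝ) * ∑ j : A, (αd j n) ^ 2) :=
      mul_le_mul_of_nonneg_left hcs (by positivity)
    have h1 : 0 ≤ ∑ q : Ud, ∑ j ∈ Ad, Ed * (κ j q) ^ 2 * (βd j n - (αd j n) ^ 2) := by
      apply Finset.sum_nonneg; intro q _
      apply Finset.sum_nonneg; intro j _
      have := hβd j n
      have h0 : 0 ≤ βd j n - (αd j n) ^ 2 := by linarith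
      positivity
    have h2 : 0 ≤ ((N:ℝ) - τp) * Ed *
        ∑ q ∈ Finset.univ.erase n, ρ n q * (∑ j ∈ Ad, κ j q * αd j n) ^ 2 := by
      apply mul_nonneg (by positivity)
      exact Finset.sum_nonneg fun q _ => mul_nonneg (hρ n q) (sq_nonneg _)
    have h3 : 0 ≤ ∑ k : Uu, E k * ε n k :=
      Finset.sum_nonneg fun k _ => mul_nonneg (hE k).1 (hε n k)
    have hd : N₀ ≤ (∑ q : Ud, ∑ j ∈ Ad, Ed * (κ j q) ^ 2 * (βd j n - (αd j n) ^ 2))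
        + ((N:ℝ) - τp) * Ed *
            (∑ q ∈ Finset.univ.erase n, ρ n q * (∑ j ∈ Ad, κ j q * αd j n) ^ 2)
        + (∑ k : Uu, E k * ε n k) + N₀ := by linarith
    refine ⟨div_nonneg hnum0 (le_trans hN₀.le hd), ?_⟩
    calc ((N:ℝ) - τp) * Ed * (∑ j ∈ Ad, αd j n * κ j n) ^ 2 /
          ((∑ q : Ud, ∑ j ∈ Ad, Ed * (κ j q) ^ 2 * (βd j n - (αd j n) ^ 2))
            + ((N:ℝ) - τp) * Ed *
                (∑ q ∈ Finset.univ.erase n, ρ n q * (∑ j ∈ Ad, κ j q * αd j n) ^ 2)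
            + (∑ k : Uu, E k * ε n k) + N₀)
        ≤ ((N:ℝ) - τp) * Ed * ((Fintype.card A : ℝ) * ∑ j : A, (αd j n) ^ 2) / N₀ :=
          div_le_div₀ (by positivity) hnum hN₀ hd
      _ = Cd n := by rw [hCd]
  -- uniform bound on the sum spectral efficiency
  have hbound : ∀ (Au Ad : Finset A) (ω : A → Uu → ℂ) (E : Uu → ℝ) (κ : A → Ud → ℝ),
      (∀ k, 0 ≤ E k ∧ E k ≤ Eu) → (∀ j : A, ∑ q : Ud, (κ j q) ^ 2 ≤ 1) →
      Rs Au Ad ω E κ ≤ B := by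
    intro Au Ad ω E κ hE hκ
    rw [hRs, hB]
    have h1 : (∑ k : Uu, Real.log (1 + ηu Au Ad ω E κ k)) ≤ ∑ k : Uu, Real.log (1 + Cu k) := by
      apply Finset.sum_le_sum; intro k _
      obtain ⟨h0, hle⟩ := hηu_bound Au Ad ω E κ hE k
      gcongr
    have h2 : (∑ n : Ud, Real.log (1 + ηd Ad E κ n)) ≤ ∑ n : Ud, Real.log (1 + Cd n) := by
      apply Finset.sum_le_sum; intro n _
      obtain ⟨h0, hle⟩ := hηd_bound Ad E κ hE hκ n
      gcongr
    linarith
  -- main argument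
  rw [hRbar, hRbar]
  apply csSup_le_csSup
  · refine ⟨B, ?_⟩
    rintro r ⟨ω, E, κ, hE, hκ, rfl⟩
    exact hbound Au' Ad' ω E κ hE hκ
  · exact ⟨Rs Au Ad (fun _ _ => 0) (fun _ => 0) (fun _ _ => 0),
      fun _ _ => 0, fun _ => 0, fun _ _ => 0,
      fun k => ⟨le_refl 0, hEu.le⟩, fun j => by simp, rfl⟩
  · rintro r ⟨ω, E, κ, hE, hκ, rfl⟩
    refine ⟨fun m kk => if m ∈ Au then ω m kk else 0, E,
      fun j q => if j ∈ Ad then κ j q else 0, hE, ?_, ?_⟩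
    · intro j
      by_cases hj : j ∈ Ad
      · simpa [hj] using hκ j
      · simp [hj]
    · set ω' : A → Uu → ℂ := fun m kk => if m ∈ Au then ω m kk else 0 with hω'
      set κ' : A → Ud → ℝ := fun j q => if j ∈ Ad then κ j q else 0 with hκ'
      have hzeq : ∀ (k : Uu) (i : Uu),
          (∑ m ∈ Au', (starRingEnd ℂ) (ω' m k) * (((αu m i) ^ 2 : ℝ) : ℂ))
            = ∑ m ∈ Au, (starRingEnd ℂ) (ω m k) * (((αu m i) ^ 2 : ℝ) : ℂ) := by
        intro k i
        exact sum_restrict' hAu (fun m _ hm => by simp [hω', hm]) (fun m hm => by simp [hω', hm])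
      have hT1 : ∀ (k : Uu),
          (∑ k' : Uu, E k' * ∑ m ∈ Au', ‖ω' m k‖ ^ 2 * (αu m k) ^ 2 * (βu m k' - (αu m k') ^ 2))
            = ∑ k' : Uu, E k' * ∑ m ∈ Au, ‖ω m k‖ ^ 2 * (αu m k) ^ 2 * (βu m k' - (αu m k') ^ 2) := by
        intro k
        refine Finset.sum_congr rfl fun k' _ => ?_
        exact congrArg (fun x => E k' * x)
          (sum_restrict' hAu (fun m _ hm => by simp [hω', hm]) (fun m hm => by simp [hω', hm]))
      have hT2 : ∀ (k : Uu),
          (∑ i ∈ (P k).erase k,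
              E i * ‖∑ m ∈ Au', (starRingEnd ℂ) (ω' m k) * (((αu m i) ^ 2 : ℝ) : ℂ)‖ ^ 2)
            = ∑ i ∈ (P k).erase k,
              E i * ‖∑ m ∈ Au, (starRingEnd ℂ) (ω m k) * (((αu m i) ^ 2 : ℝ) : ℂ)‖ ^ 2 :=
        fun k => Finset.sum_congr rfl fun i _ => by rw [hzeq k i]
      have hT3 : ∀ (k : Uu),
          (∑ n : Ud, ∑ m ∈ Au', ∑ j ∈ Ad',
              Ed * (κ' j n) ^ 2 * ζ m j * ‖ω' m k‖ ^ 2 * (αu m k) ^ 2)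
            = ∑ n : Ud, ∑ m ∈ Au, ∑ j ∈ Ad,
              Ed * (κ j n) ^ 2 * ζ m j * ‖ω m k‖ ^ 2 * (αu m k) ^ 2 := by
        intro k
        refine Finset.sum_congr rfl fun n _ => ?_
        refine sum_restrict' hAu (fun m _ hm => by simp [hω', hm]) (fun m hm => ?_)
        refine sum_restrict' hAd (fun j _ hj => by simp [hκ', hj]) (fun j hj => by simp [hω', hκ', hm, hj])
      have hT4 : ∀ (k : Uu),
          (∑ m ∈ Au', ‖ω' m k‖ ^ 2 * (αu m k) ^ 2) = ∑ m ∈ Au, ‖ω m k‖ ^ 2 * (αu m k) ^ 2 :=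
        fun k => sum_restrict' hAu (fun m _ hm => by simp [hω', hm]) (fun m hm => by simp [hω', hm])
      have hηueq : ∀ k, ηu Au' Ad' ω' E κ' k = ηu Au Ad ω E κ k := by
        intro k
        rw [hηu Au' Ad' ω' E κ' k, hηu Au Ad ω E κ k, hzeq k k, hT1 k, hT2 k, hT3 k, hT4 k]
      have hD1 : ∀ (n : Ud), (∑ j ∈ Ad', αd j n * κ' j n) = ∑ j ∈ Ad, αd j n * κ j n := by
        intro n
        exact sum_restrict' hAd (fun j _ hj => by simp [hκ', hj]) (fun j hj => by simp [hκ', hj])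
      have hD1' : ∀ (n : Ud) (q : Ud), (∑ j ∈ Ad', κ' j q * αd j n) = ∑ j ∈ Ad, κ j q * αd j n := by
        intro n q
        exact sum_restrict' hAd (fun j _ hj => by simp [hκ', hj]) (fun j hj => by simp [hκ', hj])
      have hD2 : ∀ (n : Ud),
          (∑ q : Ud, ∑ j ∈ Ad', Ed * (κ' j q) ^ 2 * (βd j n - (αd j n) ^ 2))
            = ∑ q : Ud, ∑ j ∈ Ad, Ed * (κ j q) ^ 2 * (βd j n - (αd j n) ^ 2) := by
        intro n
        refine Finset.sum_congr rfl fun q _ => ?_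
        exact sum_restrict' hAd (fun j _ hj => by simp [hκ', hj]) (fun j hj => by simp [hκ', hj])
      have hD3 : ∀ (n : Ud),
          (∑ q ∈ Finset.univ.erase n, ρ n q * (∑ j ∈ Ad', κ' j q * αd j n) ^ 2)
            = ∑ q ∈ Finset.univ.erase n, ρ n q * (∑ j ∈ Ad, κ j q * αd j n) ^ 2 :=
        fun n => Finset.sum_congr rfl fun q _ => by rw [hD1' n q]
      have hηdeq : ∀ n, ηd Ad' E κ' n = ηd Ad E κ n := by
        intro n
        rw [hηd Ad' E κ' n, hηd Ad E κ n, hD1 n, hD2 n, hD3 n]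
      rw [hRs, hRs]
      congr 1
      · exact Finset.sum_congr rfl fun k _ => by rw [hηueq k]
      · exact Finset.sum_congr rfl fun n _ => by rw [hηdeq n]
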